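/- Let S₁ be an irreducible algebraic subset of ℂ^{N} of complex dimension N−1 (N = n₀+n₁+⋯+n_l), contained in the generalized Fock-Bargmann-Hartogs domain D = {(z,w) : Σⱼ ‖w_{(j)}‖^{2pⱼ} < e^{-μ‖z‖²}}, and let S' be the closure of S₁ in projective space ℙ^{N} intersected with the affine chart U₁ = {z₁ ≠ 0}, with H₁ = {ζ = 0} the hyperplane at infinity in that chart. Then S' ∩ H₁ ⊆ {ζ = 0, s_{(1)} = ⋯ = s_{(l)} = 0}, so dim(S' ∩ H₁) ≤ n₀ − 1. -/

import Mathlib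

open MeasureTheory Real

/-- The key step in the properness argument of Bi–Tu (Theorem 1.7): in the affine
chart `U₁` of `ℙ^N` with coordinates `(ζ, t, s)` (where `ζ` is the rescaled
hyperplane-at-infinity coordinate and `t' = (1,t)`), the part of the projective
closure `S'` of an algebraic hypersurface `S₁ ⊂ D` lying on the hyperplane at
infinity `H₁ = {ζ = 0}` is contained in `{ζ = 0, s_{(1)} = ⋯ = s_{(l)} = 0}`
(a subspace of dimension `n₀ - 1`): points of `S'` off `H₁` satisfy the chart
form `Σⱼ ‖s_{(j)}‖^{2pⱼ}/|ζ|^{2pⱼ} < e^{-μ‖t'‖²/|ζ|²}` of the defining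
inequality of `D`, and letting `ζ → 0` forces `s → 0`. -/
theorem closure_at_infinity_fiber_vanishes
    (n₀ l : ℕ) (hn₀ : 0 < n₀) (n : Fin l → ℕ) (hn : ∀ i, 0 < n i)
    (p : Fin l → ℝ) (hp : ∀ i, 0 < p i) (μ : ℝ) (hμ : 0 < μ)
    (S' : Set (ℂ × EuclideanSpace ℂ (Fin (n₀ - 1)) ×
      ((i : Fin l) → EuclideanSpace ℂ (Fin (n i)))))
    (hclosed : IsClosed S')
    (hchart : ∀ u ∈ S', u.1 ≠ 0 →
      ∑ j, ‖u.2.2 j‖ ^ (2 * p j) / ‖u.1‖ ^ (2 * p j) <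
        Real.exp (-μ * (1 + ‖u.2.1‖ ^ 2) / ‖u.1‖ ^ 2))
    (hdense : S' ⊆ closure (S' ∩ {u | u.1 ≠ 0})) :
    ∀ u ∈ S', u.1 = 0 → u.2.2 = 0 := by
  intro u hu hu1
  funext j
  -- The set where `‖s_j‖ ≤ |ζ|` is closed and contains `S' ∩ {ζ ≠ 0}`.
  have hsub : S' ∩ {u | u.1 ≠ 0} ⊆
      {v : ℂ × EuclideanSpace ℂ (Fin (n₀ - 1)) ×
        ((i : Fin l) → EuclideanSpace ℂ (Fin (n i))) |
        ‖v.2.2 j‖ ≤ ‖v.1‖} := by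
    rintro v ⟨hvS, hv1⟩
    have habs : 0 < ‖v.1‖ := by
      simpa [norm_pos_iff] using hv1
    have hsum := hchart v hvS hv1
    have hterm : ‖v.2.2 j‖ ^ (2 * p j) / ‖v.1‖ ^ (2 * p j) ≤
        ∑ j', ‖v.2.2 j'‖ ^ (2 * p j') / ‖v.1‖ ^ (2 * p j') := by
      refine Finset.single_le_sum (f := fun j' => ‖v.2.2 j'‖ ^ (2 * p j') / ‖v.1‖ ^ (2 * p j')) (fun i _ => ?_) (Finset.mem_univ j)
      positivity
    have hexp : Real.exp (-μ * (1 + ‖v.2.1‖ ^ 2) / ‖v.1‖ ^ 2) ≤ 1 := by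
      rw [Real.exp_le_one_iff]
      have h1 : (0:ℝ) < 1 + ‖v.2.1‖ ^ 2 := by positivity
      have : -μ * (1 + ‖v.2.1‖ ^ 2) ≤ 0 := by nlinarith
      exact div_nonpos_of_nonpos_of_nonneg this (by positivity)
    have hlt1 : ‖v.2.2 j‖ ^ (2 * p j) / ‖v.1‖ ^ (2 * p j) < 1 :=
      lt_of_le_of_lt hterm (lt_of_lt_of_le hsum hexp)
    have hpow : ‖v.2.2 j‖ ^ (2 * p j) < ‖v.1‖ ^ (2 * p j) := by
      have hd : (0:ℝ) < ‖v.1‖ ^ (2 * p j) := by positivity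
      rwa [div_lt_one hd] at hlt1
    by_contra hle
    simp only [Set.mem_setOf_eq, not_le] at hle
    exact absurd (Real.rpow_le_rpow (norm_nonneg _) hle.le
      (by linarith [hp j] : (0:ℝ) ≤ 2 * p j)) (not_le.mpr hpow)
  have hCclosed : IsClosed {v : ℂ × EuclideanSpace ℂ (Fin (n₀ - 1)) ×
      ((i : Fin l) → EuclideanSpace ℂ (Fin (n i))) |
      ‖v.2.2 j‖ ≤ ‖v.1‖} := by
    apply isClosed_le
    · exact continuous_norm.comp ((continuous_apply j).comp
        (continuous_snd.comp continuous_snd))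
    · exact continuous_norm.comp continuous_fst
  have hu' := closure_minimal hsub hCclosed (hdense hu)
  have : ‖u.2.2 j‖ ≤ 0 := by
    simpa [hu1] using hu'
  simpa using norm_le_zero_iff.mp this
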